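/- Let n1, n2 be positive integers, let γ > 0, let J : ℝ^{n1×n2} × ℝ^{n1} → ℝ be lower semicontinuous and bounded on bounded sets, let μ2^d ∈ ℝ^{n2} with μ2^d ≥ 0 componentwise, and let c_d ∈ ℝ^{n1×n2}. Then the regularized bilevel Hitchcock problem has at least one optimal solution: there exists (π*, μ1*, c*) in the regularized bilevel feasible set F_γ(μ2^d) such that J(π*, μ1*) + (1/(2γ))‖c* − c_d‖_F² ≤ J(π, μ1) + (1/(2γ))‖c − c_d‖_F² for all (π, μ1, c) ∈ F_γ(μ2^d). -/

import Mathlib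

noncomputable section

/-- The transport polytope Π(μ1, μ2). -/
def transportPolytope {n1 n2 : ℕ} (μ1 : Fin n1 → ℝ) (μ2 : Fin n2 → ℝ) :
    Set (Fin n1 → Fin n2 → ℝ) :=
  {π | (∀ i j, 0 ≤ π i j) ∧ (∀ i, (∑ j, π i j) = μ1 i) ∧ (∀ j, (∑ i, π i j) = μ2 j)}

/-- The Frobenius inner product ⟨c, π⟩_F.  Note that `frob π π = ‖π‖_F²`. -/
def frob {n1 n2 : ℕ} (c π : Fin n1 → Fin n2 → ℝ) : ℝ := ∑ i, ∑ j, c i j * π i j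

/-- π solves the regularized Hitchcock problem (H_γ) w.r.t. μ1, μ2, c. -/
def SolvesHreg {n1 n2 : ℕ} (γ : ℝ) (μ1 : Fin n1 → ℝ) (μ2 : Fin n2 → ℝ)
    (c π : Fin n1 → Fin n2 → ℝ) : Prop :=
  π ∈ transportPolytope μ1 μ2 ∧
    ∀ θ ∈ transportPolytope μ1 μ2,
      frob c π + γ / 2 * frob π π ≤ frob c θ + γ / 2 * frob θ θ

/-- The regularized bilevel feasible set F_γ(μ2^d). -/
def regBilevelFeas {n1 n2 : ℕ} (γ : ℝ) (μ2d : Fin n2 → ℝ) :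
    Set ((Fin n1 → Fin n2 → ℝ) × (Fin n1 → ℝ) × (Fin n1 → Fin n2 → ℝ)) :=
  {p | (∀ i, 0 ≤ p.2.1 i) ∧ ((∑ i, p.2.1 i) = ∑ j, μ2d j) ∧
    SolvesHreg γ p.2.1 μ2d p.2.2 p.1}

/-- J is bounded on bounded sets. -/
def BddOnBddSets {n1 n2 : ℕ} (J : (Fin n1 → Fin n2 → ℝ) × (Fin n1 → ℝ) → ℝ) : Prop :=
  ∀ M : ℝ, 0 < M → ∃ B : ℝ, ∀ p : (Fin n1 → Fin n2 → ℝ) × (Fin n1 → ℝ), ‖p‖ ≤ M → J p ≤ B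

/-! ### Auxiliary lemmas -/

open Filter Topology

section Aux

/-- A lower semicontinuous real function attains its minimum on a nonempty compact set. -/
lemma lsc_min {X : Type*} [TopologicalSpace X] {s : Set X} (hs : IsCompact s)
    (hne : s.Nonempty) {f : X → ℝ} (hf : LowerSemicontinuous f) :
    ∃ x ∈ s, ∀ y ∈ s, f x ≤ f y := by
  have h := hs.inter_iInter_nonempty (fun y : s => {x | f x ≤ f y.1})
    (fun y => hf.isClosed_preimage (f y.1))
    (by
      intro u
      rcases u.eq_empty_or_nonempty with rfl | hu
      · simpa using hne
      · obtain ⟨y, hy, hmin⟩ := u.exists_min_image (fun y : s => f y.1) hu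
        exact ⟨y.1, y.2, by simp only [Set.mem_iInter]; intro i hi; exact hmin i hi⟩)
  obtain ⟨x, hxs, hx⟩ := h
  refine ⟨x, hxs, fun y hy => ?_⟩
  simpa using Set.mem_iInter.1 hx ⟨y, hy⟩

variable {n1 n2 : ℕ}

lemma frob_nonneg (x : Fin n1 → Fin n2 → ℝ) : 0 ≤ frob x x :=
  Finset.sum_nonneg fun _ _ => Finset.sum_nonneg fun _ _ => mul_self_nonneg _

lemma frob_sub_sub (a b : Fin n1 → Fin n2 → ℝ) :
    frob (a - b) (a - b) = frob a a - frob a b - frob b a + frob b b := by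
  simp only [frob, Pi.sub_apply, ← Finset.sum_sub_distrib, ← Finset.sum_add_distrib]
  exact Finset.sum_congr rfl fun i _ => Finset.sum_congr rfl fun j _ => by ring

lemma frob_comm (a b : Fin n1 → Fin n2 → ℝ) : frob a b = frob b a :=
  Finset.sum_congr rfl fun _ _ => Finset.sum_congr rfl fun _ _ => mul_comm _ _

lemma frob_neg_smul (t : ℝ) (a b : Fin n1 → Fin n2 → ℝ) :
    frob (fun i j => -(t * a i j)) b = -(t * frob a b) := by
  simp only [frob, Finset.mul_sum, ← Finset.sum_neg_distrib]
  exact Finset.sum_congr rfl fun i _ => Finset.sum_congr rfl fun j _ => by ring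

lemma continuous_frob :
    Continuous (fun p : (Fin n1 → Fin n2 → ℝ) × (Fin n1 → Fin n2 → ℝ) => frob p.1 p.2) := by
  apply continuous_finset_sum; intro i _
  apply continuous_finset_sum; intro j _
  exact (((continuous_apply j).comp ((continuous_apply i).comp continuous_fst)).mul
    ((continuous_apply j).comp ((continuous_apply i).comp continuous_snd :
      Continuous fun p : (Fin n1 → Fin n2 → ℝ) × (Fin n1 → Fin n2 → ℝ) => p.2 i)))

/-- Interpolation parameter used to perturb a transport plan when the row marginal moves. -/
def lam (μ1 μ1' : Fin n1 → ℝ) : ℝ :=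
  min 1 (∑ i, if μ1 i = 0 then 0 else max 0 ((μ1 i - μ1' i) / μ1 i))

lemma lam_nonneg (μ1 μ1' : Fin n1 → ℝ) : 0 ≤ lam μ1 μ1' :=
  le_min one_pos.le (Finset.sum_nonneg fun i _ => by
    by_cases h : μ1 i = 0 <;> simp [h, le_max_left])

lemma lam_le_one (μ1 μ1' : Fin n1 → ℝ) : lam μ1 μ1' ≤ 1 := min_le_left _ _

lemma lam_ge {μ1 μ1' : Fin n1 → ℝ} (hμ1 : ∀ i, 0 ≤ μ1 i) (hμ1' : ∀ i, 0 ≤ μ1' i) (i : Fin n1)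
    (hi : μ1 i ≠ 0) : (μ1 i - μ1' i) / μ1 i ≤ lam μ1 μ1' := by
  have hpos : 0 < μ1 i := lt_of_le_of_ne (hμ1 i) (Ne.symm hi)
  have h1 : (μ1 i - μ1' i) / μ1 i ≤ 1 := by
    rw [div_le_one hpos]; linarith [hμ1' i]
  have h2 : (μ1 i - μ1' i) / μ1 i ≤
      ∑ k, if μ1 k = 0 then 0 else max 0 ((μ1 k - μ1' k) / μ1 k) := by
    calc (μ1 i - μ1' i) / μ1 i
        ≤ (if μ1 i = 0 then 0 else max 0 ((μ1 i - μ1' i) / μ1 i)) := by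
          simp [hi, le_max_right]
      _ ≤ _ := Finset.single_le_sum (f := fun k =>
          if μ1 k = 0 then 0 else max 0 ((μ1 k - μ1' k) / μ1 k))
          (fun k _ => by by_cases h : μ1 k = 0 <;> simp [h, le_max_left])
          (Finset.mem_univ i)
  exact le_min h1 h2

lemma lam_self (μ1 : Fin n1 → ℝ) : lam μ1 μ1 = 0 := by
  have : (∑ i, if μ1 i = 0 then (0:ℝ) else max 0 ((μ1 i - μ1 i) / μ1 i)) = 0 :=
    Finset.sum_eq_zero fun i _ => by by_cases h : μ1 i = 0 <;> simp [h]
  simp [lam, this]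

lemma continuous_lam (μ1 : Fin n1 → ℝ) : Continuous (lam μ1) := by
  apply continuous_const.min
  apply continuous_finset_sum; intro i _
  by_cases h : μ1 i = 0
  · simp only [h, if_true]; exact continuous_const
  · simp only [h, if_false]
    exact continuous_const.max ((continuous_const.sub (continuous_apply i)).div_const _)

lemma tendsto_frob {α : Type*} {l : Filter α} {f g : α → (Fin n1 → Fin n2 → ℝ)}
    {a b : Fin n1 → Fin n2 → ℝ} (hf : Tendsto f l (𝓝 a)) (hg : Tendsto g l (𝓝 b)) :
    Tendsto (fun k => frob (f k) (g k)) l (𝓝 (frob a b)) := by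
  simp only [frob]
  exact tendsto_finset_sum _ fun i _ => tendsto_finset_sum _ fun j _ =>
    (tendsto_pi_nhds.1 (tendsto_pi_nhds.1 hf i) j).mul
      (tendsto_pi_nhds.1 (tendsto_pi_nhds.1 hg i) j)

/-- The perturbed transport plan with row marginal `μ1'` built from `θ ∈ Π(μ1, μ2d)`. -/
def pert (S : ℝ) (μ2d : Fin n2 → ℝ) (μ1 : Fin n1 → ℝ) (θ : Fin n1 → Fin n2 → ℝ)
    (μ1' : Fin n1 → ℝ) : Fin n1 → Fin n2 → ℝ :=
  fun i j => (1 - lam μ1 μ1') * θ i j + (μ1' i - μ1 i + lam μ1 μ1' * μ1 i) * (μ2d j / S)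

lemma pert_self (S : ℝ) (μ2d : Fin n2 → ℝ) (μ1 : Fin n1 → ℝ) (θ : Fin n1 → Fin n2 → ℝ) :
    pert S μ2d μ1 θ μ1 = θ := by
  funext i j; simp [pert, lam_self]

lemma continuous_pert (S : ℝ) (μ2d : Fin n2 → ℝ) (μ1 : Fin n1 → ℝ)
    (θ : Fin n1 → Fin n2 → ℝ) : Continuous (pert S μ2d μ1 θ) := by
  apply continuous_pi; intro i; apply continuous_pi; intro j
  exact ((continuous_const.sub (continuous_lam μ1)).mul continuous_const).add
    ((((continuous_apply i).sub continuous_const).add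
      ((continuous_lam μ1).mul continuous_const)).mul continuous_const)

lemma pert_mem {S : ℝ} (hS : 0 < S) {μ2d : Fin n2 → ℝ} (hμ2d : ∀ j, 0 ≤ μ2d j)
    (hSeq : S = ∑ j, μ2d j) {μ1 μ1' : Fin n1 → ℝ} (hμ1 : ∀ i, 0 ≤ μ1 i)
    (hμ1sum : (∑ i, μ1 i) = S) (hμ1' : ∀ i, 0 ≤ μ1' i) (hμ1'sum : (∑ i, μ1' i) = S)
    {θ : Fin n1 → Fin n2 → ℝ} (hθ : θ ∈ transportPolytope μ1 μ2d) :
    pert S μ2d μ1 θ μ1' ∈ transportPolytope μ1' μ2d := by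
  obtain ⟨hθpos, hθrow, hθcol⟩ := hθ
  have hlam0 := lam_nonneg μ1 μ1'
  have hlam1 := lam_le_one μ1 μ1'
  have hkey : ∀ i, 0 ≤ μ1' i - μ1 i + lam μ1 μ1' * μ1 i := by
    intro i
    by_cases h : μ1 i = 0
    · simp [h]; linarith [hμ1' i]
    · have hpos : 0 < μ1 i := lt_of_le_of_ne (hμ1 i) (Ne.symm h)
      have := lam_ge hμ1 hμ1' i h
      have := (div_le_iff₀ hpos).1 this
      linarith
  refine ⟨fun i j => ?_, fun i => ?_, fun j => ?_⟩
  · apply add_nonneg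
    · exact mul_nonneg (by linarith) (hθpos i j)
    · exact mul_nonneg (hkey i) (div_nonneg (hμ2d j) hS.le)
  · simp only [pert]
    rw [Finset.sum_add_distrib, ← Finset.mul_sum, ← Finset.mul_sum, hθrow i,
      ← Finset.sum_div, ← hSeq]
    field_simp
    ring
  · simp only [pert]
    rw [Finset.sum_add_distrib, ← Finset.mul_sum, ← Finset.sum_mul, hθcol j]
    have : (∑ i, (μ1' i - μ1 i + lam μ1 μ1' * μ1 i)) = lam μ1 μ1' * S := by
      rw [Finset.sum_add_distrib, Finset.sum_sub_distrib, ← Finset.mul_sum, hμ1sum,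
        hμ1'sum]
      ring
    rw [this]
    field_simp
    ring

set_option maxHeartbeats 1000000 in
/-- The regularized bilevel feasible set is closed (case of positive total mass). -/
lemma feas_closed {n1 n2 : ℕ} {γ : ℝ} {μ2d : Fin n2 → ℝ} (hμ2d : ∀ j, 0 ≤ μ2d j)
    (hS : 0 < ∑ j, μ2d j) : IsClosed (regBilevelFeas (n1 := n1) γ μ2d) := by
  set S := ∑ j, μ2d j with hSdef
  apply IsSeqClosed.isClosed
  intro x p hx hlim
  have h2 : Tendsto (fun k => (x k).2) atTop (𝓝 p.2) := (continuous_snd.tendsto p).comp hlim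
  have hπ : Tendsto (fun k => (x k).1) atTop (𝓝 p.1) := (continuous_fst.tendsto p).comp hlim
  have hμ : Tendsto (fun k => (x k).2.1) atTop (𝓝 p.2.1) := (continuous_fst.tendsto p.2).comp h2
  have hc : Tendsto (fun k => (x k).2.2) atTop (𝓝 p.2.2) := (continuous_snd.tendsto p.2).comp h2
  have hμi : ∀ i, Tendsto (fun k => (x k).2.1 i) atTop (𝓝 (p.2.1 i)) := tendsto_pi_nhds.1 hμ
  have hπij : ∀ i j, Tendsto (fun k => (x k).1 i j) atTop (𝓝 (p.1 i j)) :=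
    fun i => tendsto_pi_nhds.1 (tendsto_pi_nhds.1 hπ i)
  -- nonnegativity of the limit marginal
  have hμpos : ∀ i, 0 ≤ p.2.1 i := fun i => ge_of_tendsto' (hμi i) fun k => (hx k).1 i
  -- total mass of the limit marginal
  have hμsum : (∑ i, p.2.1 i) = S := by
    have hsum : Tendsto (fun k => ∑ i, (x k).2.1 i) atTop (𝓝 (∑ i, p.2.1 i)) :=
      tendsto_finset_sum _ fun i _ => hμi i
    exact (tendsto_nhds_unique (hsum.congr fun k => (hx k).2.1) tendsto_const_nhds)
  -- the limit plan is in the limit polytope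
  have hπmem : p.1 ∈ transportPolytope p.2.1 μ2d := by
    refine ⟨fun i j => ge_of_tendsto' (hπij i j) fun k => (hx k).2.2.1.1 i j, fun i => ?_,
      fun j => ?_⟩
    · have hrow : Tendsto (fun k => ∑ j, (x k).1 i j) atTop (𝓝 (∑ j, p.1 i j)) :=
        tendsto_finset_sum _ fun j _ => hπij i j
      exact tendsto_nhds_unique (hrow.congr fun k => (hx k).2.2.1.2.1 i) (hμi i)
    · have hcol : Tendsto (fun k => ∑ i, (x k).1 i j) atTop (𝓝 (∑ i, p.1 i j)) :=
        tendsto_finset_sum _ fun i _ => hπij i j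
      exact tendsto_nhds_unique (hcol.congr fun k => (hx k).2.2.1.2.2 j) tendsto_const_nhds
  refine ⟨hμpos, hμsum, hπmem, ?_⟩
  -- optimality passes to the limit
  intro θ hθ
  set θseq : ℕ → (Fin n1 → Fin n2 → ℝ) := fun k => pert S μ2d p.2.1 θ ((x k).2.1) with hθseq
  have hmem : ∀ k, θseq k ∈ transportPolytope ((x k).2.1) μ2d := fun k =>
    pert_mem hS hμ2d hSdef hμpos hμsum ((hx k).1) ((hx k).2.1) hθ
  have hineq : ∀ k,
      frob (x k).2.2 (x k).1 + γ / 2 * frob (x k).1 (x k).1 ≤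
        frob (x k).2.2 (θseq k) + γ / 2 * frob (θseq k) (θseq k) :=
    fun k => (hx k).2.2.2 (θseq k) (hmem k)
  have hθt : Tendsto θseq atTop (𝓝 θ) := by
    have := ((continuous_pert S μ2d p.2.1 θ).tendsto p.2.1).comp hμ
    rwa [pert_self] at this
  have hL : Tendsto (fun k => frob (x k).2.2 (x k).1 + γ / 2 * frob (x k).1 (x k).1) atTop
      (𝓝 (frob p.2.2 p.1 + γ / 2 * frob p.1 p.1)) :=
    (tendsto_frob hc hπ).add (tendsto_const_nhds.mul (tendsto_frob hπ hπ))
  have hR : Tendsto (fun k => frob (x k).2.2 (θseq k) + γ / 2 * frob (θseq k) (θseq k)) atTop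
      (𝓝 (frob p.2.2 θ + γ / 2 * frob θ θ)) :=
    (tendsto_frob hc hθt).add (tendsto_const_nhds.mul (tendsto_frob hθt hθt))
  exact le_of_tendsto_of_tendsto' hL hR hineq

end Aux

/-- The regularized bilevel Hitchcock problem has at least one optimal solution. -/
theorem regularized_bilevel_hitchcock_has_solution (n1 n2 : ℕ) (hn1 : 0 < n1) (hn2 : 0 < n2)
    (γ : ℝ) (hγ : 0 < γ)
    (J : (Fin n1 → Fin n2 → ℝ) × (Fin n1 → ℝ) → ℝ)
    (hJ : LowerSemicontinuous J) (hJbdd : BddOnBddSets J)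
    (μ2d : Fin n2 → ℝ) (hμ2d : ∀ j, 0 ≤ μ2d j) (cd : Fin n1 → Fin n2 → ℝ) :
    ∃ p ∈ regBilevelFeas (n1 := n1) γ μ2d,
      ∀ q ∈ regBilevelFeas (n1 := n1) γ μ2d,
        J (p.1, p.2.1) + 1 / (2 * γ) * frob (p.2.2 - cd) (p.2.2 - cd) ≤
          J (q.1, q.2.1) + 1 / (2 * γ) * frob (q.2.2 - cd) (q.2.2 - cd) := by
  classical
  have hS0 : 0 ≤ ∑ j, μ2d j := Finset.sum_nonneg fun j _ => hμ2d j
  rcases hS0.lt_or_eq with hS | hS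
  · -- positive total mass
    have hfc : IsClosed (regBilevelFeas (n1 := n1) γ μ2d) := feas_closed hμ2d hS
    have hn1R : (0:ℝ) < n1 := by exact_mod_cast hn1
    set π₀ : Fin n1 → Fin n2 → ℝ := fun _ j => μ2d j / n1 with hπ₀
    set μ₀ : Fin n1 → ℝ := fun _ => (∑ j, μ2d j) / n1 with hμ₀
    set c₀ : Fin n1 → Fin n2 → ℝ := fun i j => -(γ * π₀ i j) with hc₀
    have hπ₀mem : π₀ ∈ transportPolytope μ₀ μ2d := by
      refine ⟨fun i j => div_nonneg (hμ2d j) hn1R.le, fun i => ?_, fun j => ?_⟩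
      · rw [hπ₀, hμ₀, ← Finset.sum_div]
      · rw [hπ₀]
        simp only [Finset.sum_const, Finset.card_univ, Fintype.card_fin, nsmul_eq_mul]
        field_simp
    have hp₀ : (π₀, μ₀, c₀) ∈ regBilevelFeas (n1 := n1) γ μ2d := by
      refine ⟨fun i => div_nonneg hS0 hn1R.le, ?_, hπ₀mem, ?_⟩
      · rw [hμ₀]
        simp only [Finset.sum_const, Finset.card_univ, Fintype.card_fin, nsmul_eq_mul]
        field_simp
      · intro θ hθmem
        have key : 0 ≤ frob θ θ - frob θ π₀ - frob π₀ θ + frob π₀ π₀ := by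
          have hnn := frob_nonneg (θ - π₀)
          rwa [frob_sub_sub] at hnn
        rw [frob_comm θ π₀] at key
        have e1 : frob c₀ π₀ = -(γ * frob π₀ π₀) := by rw [hc₀]; exact frob_neg_smul γ π₀ π₀
        have e2 : frob c₀ θ = -(γ * frob π₀ θ) := by rw [hc₀]; exact frob_neg_smul γ π₀ θ
        rw [e1, e2]
        nlinarith [mul_nonneg hγ.le key]
    -- lower bound for J on the compact box containing all feasible (π, μ1)
    have h0hi : ((0, 0) : (Fin n1 → Fin n2 → ℝ) × (Fin n1 → ℝ)) ∈
        Set.Icc ((0, 0) : (Fin n1 → Fin n2 → ℝ) × (Fin n1 → ℝ))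
          ((fun _ _ => ∑ j, μ2d j, fun _ => ∑ j, μ2d j)) := by
      refine Set.mem_Icc.2 ⟨le_refl _, ⟨fun i j => hS0, fun i => hS0⟩⟩
    obtain ⟨z, hzmem, hzmin⟩ := lsc_min isCompact_Icc ⟨(0, 0), h0hi⟩ hJ
    have hbox : ∀ q ∈ regBilevelFeas (n1 := n1) γ μ2d,
        (q.1, q.2.1) ∈ Set.Icc ((0, 0) : (Fin n1 → Fin n2 → ℝ) × (Fin n1 → ℝ))
          ((fun _ _ => ∑ j, μ2d j, fun _ => ∑ j, μ2d j)) := by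
      intro q hq
      obtain ⟨hqpos, hqsum, ⟨⟨hppos, hprow, hpcol⟩, -⟩⟩ := hq
      refine Set.mem_Icc.2 ⟨⟨fun i j => hppos i j, fun i => hqpos i⟩,
        ⟨fun i j => ?_, fun i => ?_⟩⟩
      · calc q.1 i j ≤ ∑ i', q.1 i' j :=
              Finset.single_le_sum (fun i' _ => hppos i' j) (Finset.mem_univ i)
          _ = μ2d j := hpcol j
          _ ≤ ∑ j', μ2d j' := Finset.single_le_sum (fun j' _ => hμ2d j') (Finset.mem_univ j)
      · calc q.2.1 i ≤ ∑ i', q.2.1 i' :=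
              Finset.single_le_sum (fun i' _ => hqpos i') (Finset.mem_univ i)
          _ = _ := hqsum
    set B₀ : ℝ := J z with hB₀
    set B₁ : ℝ := J (π₀, μ₀) + 1 / (2 * γ) * frob (c₀ - cd) (c₀ - cd) with hB₁
    set R : ℝ := 2 * γ * (B₁ - B₀) with hR
    have claim : ∀ q ∈ regBilevelFeas (n1 := n1) γ μ2d,
        J (q.1, q.2.1) + 1 / (2 * γ) * frob (q.2.2 - cd) (q.2.2 - cd) ≤ B₁ →
          frob (q.2.2 - cd) (q.2.2 - cd) ≤ R := by
      intro q hq hΦq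
      have hB : B₀ ≤ J (q.1, q.2.1) := hzmin _ (hbox q hq)
      have h2γ : (0:ℝ) < 2 * γ := by linarith
      have h1 : 1 / (2 * γ) * frob (q.2.2 - cd) (q.2.2 - cd) ≤ B₁ - B₀ := by linarith
      have h2 := mul_le_mul_of_nonneg_left h1 h2γ.le
      have h3 : (2 * γ) * (1 / (2 * γ) * frob (q.2.2 - cd) (q.2.2 - cd)) =
          frob (q.2.2 - cd) (q.2.2 - cd) := by field_simp
      rw [h3] at h2
      rw [hR]
      linarith
    -- the truncated feasible set
    have hcont : Continuous (fun p : (Fin n1 → Fin n2 → ℝ) × (Fin n1 → ℝ) ×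
        (Fin n1 → Fin n2 → ℝ) => frob (p.2.2 - cd) (p.2.2 - cd)) := by
      simp only [frob, Pi.sub_apply]
      apply continuous_finset_sum; intro i _
      apply continuous_finset_sum; intro j _
      have h : Continuous (fun p : (Fin n1 → Fin n2 → ℝ) × (Fin n1 → ℝ) ×
          (Fin n1 → Fin n2 → ℝ) => p.2.2 i j) :=
        (continuous_apply j).comp ((continuous_apply i).comp
          (continuous_snd.comp continuous_snd))
      exact (h.sub continuous_const).mul (h.sub continuous_const)
    have hK'closed : IsClosed (regBilevelFeas (n1 := n1) γ μ2d ∩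
        {p | frob (p.2.2 - cd) (p.2.2 - cd) ≤ R}) :=
      hfc.inter (isClosed_le hcont continuous_const)
    have hsub : (regBilevelFeas (n1 := n1) γ μ2d ∩
        {p | frob (p.2.2 - cd) (p.2.2 - cd) ≤ R}) ⊆
        Set.Icc ((0, 0, fun i j => cd i j - Real.sqrt R) :
            (Fin n1 → Fin n2 → ℝ) × (Fin n1 → ℝ) × (Fin n1 → Fin n2 → ℝ))
          ((fun _ _ => ∑ j, μ2d j, fun _ => ∑ j, μ2d j, fun i j => cd i j + Real.sqrt R)) := by
      rintro q ⟨hq, hqR⟩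
      have hbx := Set.mem_Icc.1 (hbox q hq)
      have hcb : ∀ i j, |q.2.2 i j - cd i j| ≤ Real.sqrt R := by
        intro i j
        have hsq : (q.2.2 i j - cd i j) * (q.2.2 i j - cd i j) ≤
            frob (q.2.2 - cd) (q.2.2 - cd) := by
          calc (q.2.2 i j - cd i j) * (q.2.2 i j - cd i j)
              = (q.2.2 - cd) i j * (q.2.2 - cd) i j := by simp [Pi.sub_apply]
            _ ≤ ∑ j', (q.2.2 - cd) i j' * (q.2.2 - cd) i j' :=
                Finset.single_le_sum (f := fun j' => (q.2.2 - cd) i j' * (q.2.2 - cd) i j')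
                  (fun j' _ => mul_self_nonneg _) (Finset.mem_univ j)
            _ ≤ ∑ i', ∑ j', (q.2.2 - cd) i' j' * (q.2.2 - cd) i' j' :=
                Finset.single_le_sum
                  (f := fun i' => ∑ j', (q.2.2 - cd) i' j' * (q.2.2 - cd) i' j')
                  (fun i' _ => Finset.sum_nonneg fun _ _ => mul_self_nonneg _)
                  (Finset.mem_univ i)
            _ = frob (q.2.2 - cd) (q.2.2 - cd) := rfl
        rw [← Real.sqrt_sq_eq_abs]
        apply Real.sqrt_le_sqrt
        rw [pow_two]
        exact le_trans hsq hqR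
      refine Set.mem_Icc.2 ⟨⟨hbx.1.1, hbx.1.2, fun i j => ?_⟩,
        ⟨hbx.2.1, hbx.2.2, fun i j => ?_⟩⟩
      · have := (abs_le.1 (hcb i j)).1
        show cd i j - Real.sqrt R ≤ q.2.2 i j
        linarith
      · have := (abs_le.1 (hcb i j)).2
        show q.2.2 i j ≤ cd i j + Real.sqrt R
        linarith
    have hK'cpt : IsCompact (regBilevelFeas (n1 := n1) γ μ2d ∩
        {p | frob (p.2.2 - cd) (p.2.2 - cd) ≤ R}) :=
      IsCompact.of_isClosed_subset isCompact_Icc hK'closed hsub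
    have hΦlsc : LowerSemicontinuous (fun p : (Fin n1 → Fin n2 → ℝ) × (Fin n1 → ℝ) ×
        (Fin n1 → Fin n2 → ℝ) => J (p.1, p.2.1) + 1 / (2 * γ) *
          frob (p.2.2 - cd) (p.2.2 - cd)) :=
      (hJ.comp (continuous_fst.prodMk (continuous_fst.comp continuous_snd))).add
        ((continuous_const.mul hcont).lowerSemicontinuous)
    have hp₀K' : (π₀, μ₀, c₀) ∈ regBilevelFeas (n1 := n1) γ μ2d ∩
        {p | frob (p.2.2 - cd) (p.2.2 - cd) ≤ R} :=
      ⟨hp₀, claim _ hp₀ (le_refl _)⟩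
    obtain ⟨p, hpK', hpmin⟩ := lsc_min hK'cpt ⟨(π₀, μ₀, c₀), hp₀K'⟩ hΦlsc
    refine ⟨p, hpK'.1, fun q hq => ?_⟩
    by_cases hqR : frob (q.2.2 - cd) (q.2.2 - cd) ≤ R
    · exact hpmin q ⟨hq, hqR⟩
    · have h1 : J (p.1, p.2.1) + 1 / (2 * γ) * frob (p.2.2 - cd) (p.2.2 - cd) ≤ B₁ :=
        hpmin _ hp₀K'
      have h2 : B₀ ≤ J (q.1, q.2.1) := hzmin _ (hbox q hq)
      have h2γpos : (0:ℝ) < 1 / (2 * γ) := by positivity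
      have h3 : 1 / (2 * γ) * R < 1 / (2 * γ) * frob (q.2.2 - cd) (q.2.2 - cd) :=
        mul_lt_mul_of_pos_left (not_le.1 hqR) h2γpos
      have h4 : 1 / (2 * γ) * R = B₁ - B₀ := by rw [hR]; field_simp
      linarith
  · -- zero total mass: everything is trivial
    have hz : ∀ j, μ2d j = 0 := by
      intro j
      exact (Finset.sum_eq_zero_iff_of_nonneg (fun j _ => hμ2d j)).1 hS.symm j
        (Finset.mem_univ j)
    have hq0 : ∀ q ∈ regBilevelFeas (n1 := n1) γ μ2d, q.2.1 = 0 ∧ q.1 = 0 := by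
      intro q hq
      obtain ⟨hqpos, hqsum, hqsolve⟩ := hq
      have h1 : ∀ i, q.2.1 i = 0 := by
        intro i
        exact (Finset.sum_eq_zero_iff_of_nonneg (fun i _ => hqpos i)).1
          (by rw [hqsum, ← hS]) i (Finset.mem_univ i)
      have h2 : ∀ i j, q.1 i j = 0 := by
        intro i j
        have hpos := hqsolve.1.1
        have hle : q.1 i j ≤ 0 := by
          calc q.1 i j ≤ ∑ i', q.1 i' j :=
                Finset.single_le_sum (fun i' _ => hpos i' j) (Finset.mem_univ i)
            _ = μ2d j := hqsolve.1.2.2 j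
            _ = 0 := hz j
        exact le_antisymm hle (hpos i j)
      exact ⟨funext h1, funext fun i => funext (h2 i)⟩
    refine ⟨((0 : Fin n1 → Fin n2 → ℝ), (0 : Fin n1 → ℝ), cd), ⟨fun i => le_refl 0, ?_,
      ⟨⟨fun i j => le_refl 0, fun i => by simp, fun j => by simp [hz j]⟩, ?_⟩⟩, ?_⟩
    · simp [← hS]
    · intro θ hθ
      have hθ0 : θ = 0 := by
        funext i j
        have hle : θ i j ≤ 0 := by
          calc θ i j ≤ ∑ i', θ i' j :=
                Finset.single_le_sum (fun i' _ => hθ.1 i' j) (Finset.mem_univ i)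
            _ = μ2d j := hθ.2.2 j
            _ = 0 := hz j
        exact le_antisymm hle (hθ.1 i j)
      rw [hθ0]
    · intro q hq
      obtain ⟨h21, h1⟩ := hq0 q hq
      dsimp only
      rw [h21, h1, sub_self]
      have h0 : frob (0 : Fin n1 → Fin n2 → ℝ) 0 = 0 := by simp [frob]
      rw [h0]
      have hnn := frob_nonneg (q.2.2 - cd)
      have hpos : (0:ℝ) ≤ 1 / (2 * γ) := by positivity
      nlinarith [mul_nonneg hpos hnn]
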